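/- Let T be the digraph with vertices v₁,…,v₇ and directed edges v₁→v₂, v₁→v₃, v₁→v₄, v₅→v₂, v₆→v₃, v₇→v₄, and let S be the graph on the same vertex set with (undirected) edges v₁v₅, v₁v₆, v₁v₇, v₂v₆, v₂v₇, v₃v₅, v₃v₇, v₄v₅, v₄v₆. Then for every edge e of S, the path of the tree T⁻ joining the ends of e is not a directed path of T; yet there is no directing of S, forming a digraph S′, such that both S′ ∪ T and ←S′ ∪ T are acyclic (where ←S′ reverses all edges of S′). -/
import Mathlib


/-- `D` is a directing of the graph `S`. -/
def IsDirecting {V : Type} (S : SimpleGraph V) (D : V → V → Prop) : Prop :=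
  (∀ a b, D a b → S.Adj a b) ∧ (∀ a b, S.Adj a b → (D a b ↔ ¬ D b a))

/-- A digraph (given as a relation) is acyclic iff it has no directed cycle,
equivalently no vertex lies on a closed directed walk of positive length. -/
def Acyc {V : Type} (A : V → V → Prop) : Prop :=
  ∀ v, ¬ Relation.TransGen A v v

/-- The directed tree of statement 12: edges v₁→v₂, v₁→v₃, v₁→v₄, v₅→v₂, v₆→v₃,
v₇→v₄, with vᵢ represented by `i - 1 : Fin 7`. -/
def T12 (a b : Fin 7) : Prop :=
  (a, b) ∈ ({(0, 1), (0, 2), (0, 3), (4, 1), (5, 2), (6, 3)} : Set (Fin 7 × Fin 7))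

/-- The graph `S` of statement 12, with edges v₁v₅, v₁v₆, v₁v₇, v₂v₆, v₂v₇,
v₃v₅, v₃v₇, v₄v₅, v₄v₆. -/
def S12 : SimpleGraph (Fin 7) :=
  SimpleGraph.fromEdgeSet
    {s(0, 4), s(0, 5), s(0, 6), s(1, 5), s(1, 6), s(2, 4), s(2, 6), s(3, 4), s(3, 5)}

private lemma cyc3 {A : Fin 7 → Fin 7 → Prop} (h : Acyc A) {a b c : Fin 7}
    (h1 : A a b) (h2 : A b c) (h3 : A c a) : False :=
  h a (((Relation.TransGen.single h1).tail h2).tail h3)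

private lemma cyc4 {A : Fin 7 → Fin 7 → Prop} (h : Acyc A) {a b c d : Fin 7}
    (h1 : A a b) (h2 : A b c) (h3 : A c d) (h4 : A d a) : False :=
  h a ((((Relation.TransGen.single h1).tail h2).tail h3).tail h4)

private lemma T12_nocomp : ∀ a b c, T12 a b → ¬ T12 b c := by
  intro a b c h1 h2
  simp [T12, Prod.ext_iff] at h1 h2
  rcases h1 with ⟨h,rfl⟩|⟨h,rfl⟩|⟨h,rfl⟩|⟨h,rfl⟩|⟨h,rfl⟩|⟨h,rfl⟩ <;> simp at h2

/-- for every edge of `S12` the path of the tree `T12⁻` joining its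
ends is not a directed path of `T12` (equivalently, neither end reaches the other
in `T12`); yet no directing `S'` of `S12` makes both `S' ∪ T12` and `←S' ∪ T12`
acyclic.  So the planarity hypothesis of the planar theorem cannot be dropped. -/
theorem stmt12 :
    (∀ a b, S12.Adj a b → ¬ Relation.TransGen T12 a b) ∧
    ¬ ∃ D : Fin 7 → Fin 7 → Prop, IsDirecting S12 D ∧
        Acyc (fun a b => D a b ∨ T12 a b) ∧ Acyc (fun a b => D b a ∨ T12 a b) := by
  constructor
  · intro a b hadj htg
    have hT : T12 a b := by
      clear hadj
      induction htg with
      | single h => exact h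
      | tail _ h2 ih => exact absurd h2 (T12_nocomp _ _ _ ih)
    simp only [T12, Prod.ext_iff, Set.mem_insert_iff, Set.mem_singleton_iff] at hT
    rcases hT with ⟨rfl,rfl⟩|⟨rfl,rfl⟩|⟨rfl,rfl⟩|⟨rfl,rfl⟩|⟨rfl,rfl⟩|⟨rfl,rfl⟩ <;>
      simp [S12] at hadj
  · rintro ⟨D, ⟨-, hflip⟩, hA, hB⟩
    have t01 : T12 0 1 := by simp [T12]
    have t02 : T12 0 2 := by simp [T12]
    have t03 : T12 0 3 := by simp [T12]
    have t41 : T12 4 1 := by simp [T12]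
    have t52 : T12 5 2 := by simp [T12]
    have t63 : T12 6 3 := by simp [T12]
    have a04 : S12.Adj 0 4 := by simp [S12]
    have a05 : S12.Adj 0 5 := by simp [S12]
    have a06 : S12.Adj 0 6 := by simp [S12]
    have a15 : S12.Adj 1 5 := by simp [S12]
    have a16 : S12.Adj 1 6 := by simp [S12]
    have a24 : S12.Adj 2 4 := by simp [S12]
    have a26 : S12.Adj 2 6 := by simp [S12]
    have a34 : S12.Adj 3 4 := by simp [S12]
    have a35 : S12.Adj 3 5 := by simp [S12]
    have A1 : ¬ (D 1 5 ∧ D 5 0) := fun ⟨u,v⟩ => cyc3 hA (Or.inr t01) (Or.inl u) (Or.inl v)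
    have A2 : ¬ (D 1 6 ∧ D 6 0) := fun ⟨u,v⟩ => cyc3 hA (Or.inr t01) (Or.inl u) (Or.inl v)
    have A3 : ¬ (D 2 4 ∧ D 4 0) := fun ⟨u,v⟩ => cyc3 hA (Or.inr t02) (Or.inl u) (Or.inl v)
    have A4 : ¬ (D 2 6 ∧ D 6 0) := fun ⟨u,v⟩ => cyc3 hA (Or.inr t02) (Or.inl u) (Or.inl v)
    have A5 : ¬ (D 3 4 ∧ D 4 0) := fun ⟨u,v⟩ => cyc3 hA (Or.inr t03) (Or.inl u) (Or.inl v)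
    have A6 : ¬ (D 3 5 ∧ D 5 0) := fun ⟨u,v⟩ => cyc3 hA (Or.inr t03) (Or.inl u) (Or.inl v)
    have A7 : ¬ (D 1 5 ∧ D 2 4) := fun ⟨u,v⟩ =>
      cyc4 hA (Or.inr t41) (Or.inl u) (Or.inr t52) (Or.inl v)
    have A8 : ¬ (D 3 4 ∧ D 1 6) := fun ⟨u,v⟩ =>
      cyc4 hA (Or.inr t63) (Or.inl u) (Or.inr t41) (Or.inl v)
    have A9 : ¬ (D 2 6 ∧ D 3 5) := fun ⟨u,v⟩ =>
      cyc4 hA (Or.inr t52) (Or.inl u) (Or.inr t63) (Or.inl v)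
    have B1 : ¬ (D 5 1 ∧ D 0 5) := fun ⟨u,v⟩ => cyc3 hB (Or.inr t01) (Or.inl u) (Or.inl v)
    have B2 : ¬ (D 6 1 ∧ D 0 6) := fun ⟨u,v⟩ => cyc3 hB (Or.inr t01) (Or.inl u) (Or.inl v)
    have B3 : ¬ (D 4 2 ∧ D 0 4) := fun ⟨u,v⟩ => cyc3 hB (Or.inr t02) (Or.inl u) (Or.inl v)
    have B4 : ¬ (D 6 2 ∧ D 0 6) := fun ⟨u,v⟩ => cyc3 hB (Or.inr t02) (Or.inl u) (Or.inl v)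
    have B5 : ¬ (D 4 3 ∧ D 0 4) := fun ⟨u,v⟩ => cyc3 hB (Or.inr t03) (Or.inl u) (Or.inl v)
    have B6 : ¬ (D 5 3 ∧ D 0 5) := fun ⟨u,v⟩ => cyc3 hB (Or.inr t03) (Or.inl u) (Or.inl v)
    have B7 : ¬ (D 5 1 ∧ D 4 2) := fun ⟨u,v⟩ =>
      cyc4 hB (Or.inr t41) (Or.inl u) (Or.inr t52) (Or.inl v)
    have B8 : ¬ (D 4 3 ∧ D 6 1) := fun ⟨u,v⟩ =>
      cyc4 hB (Or.inr t63) (Or.inl u) (Or.inr t41) (Or.inl v)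
    have B9 : ¬ (D 6 2 ∧ D 5 3) := fun ⟨u,v⟩ =>
      cyc4 hB (Or.inr t52) (Or.inl u) (Or.inr t63) (Or.inl v)
    have n : ∀ a b, S12.Adj a b → ¬ D a b → D b a := fun a b h h' =>
      Classical.byContradiction fun h'' => h' ((hflip a b h).mpr h'')
    have e15 : D 1 5 ↔ D 0 5 :=
      ⟨fun u => Classical.byContradiction fun h => A1 ⟨u, n 0 5 a05 h⟩,
       fun u => Classical.byContradiction fun h => B1 ⟨n 1 5 a15 h, u⟩⟩
    have e16 : D 1 6 ↔ D 0 6 :=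
      ⟨fun u => Classical.byContradiction fun h => A2 ⟨u, n 0 6 a06 h⟩,
       fun u => Classical.byContradiction fun h => B2 ⟨n 1 6 a16 h, u⟩⟩
    have e24 : D 2 4 ↔ D 0 4 :=
      ⟨fun u => Classical.byContradiction fun h => A3 ⟨u, n 0 4 a04 h⟩,
       fun u => Classical.byContradiction fun h => B3 ⟨n 2 4 a24 h, u⟩⟩
    have e26 : D 2 6 ↔ D 0 6 :=
      ⟨fun u => Classical.byContradiction fun h => A4 ⟨u, n 0 6 a06 h⟩,
       fun u => Classical.byContradiction fun h => B4 ⟨n 2 6 a26 h, u⟩⟩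
    have e34 : D 3 4 ↔ D 0 4 :=
      ⟨fun u => Classical.byContradiction fun h => A5 ⟨u, n 0 4 a04 h⟩,
       fun u => Classical.byContradiction fun h => B5 ⟨n 3 4 a34 h, u⟩⟩
    have e35 : D 3 5 ↔ D 0 5 :=
      ⟨fun u => Classical.byContradiction fun h => A6 ⟨u, n 0 5 a05 h⟩,
       fun u => Classical.byContradiction fun h => B6 ⟨n 3 5 a35 h, u⟩⟩
    -- p = D 0 5, q = D 0 6, r = D 0 4; pairwise exactly one holds: contradiction
    have xpr : ¬ (D 0 5 ∧ D 0 4) := fun ⟨u,v⟩ => A7 ⟨e15.mpr u, e24.mpr v⟩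
    have xrq : ¬ (D 0 4 ∧ D 0 6) := fun ⟨u,v⟩ => A8 ⟨e34.mpr u, e16.mpr v⟩
    have xqp : ¬ (D 0 6 ∧ D 0 5) := fun ⟨u,v⟩ => A9 ⟨e26.mpr u, e35.mpr v⟩
    have opr : D 0 5 ∨ D 0 4 := Classical.byContradiction fun h =>
      B7 ⟨n 1 5 a15 fun u => h (Or.inl (e15.mp u)),
          n 2 4 a24 fun u => h (Or.inr (e24.mp u))⟩
    have orq : D 0 4 ∨ D 0 6 := Classical.byContradiction fun h =>
      B8 ⟨n 3 4 a34 fun u => h (Or.inl (e34.mp u)),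
          n 1 6 a16 fun u => h (Or.inr (e16.mp u))⟩
    have oqp : D 0 6 ∨ D 0 5 := Classical.byContradiction fun h =>
      B9 ⟨n 2 6 a26 fun u => h (Or.inl (e26.mp u)),
          n 3 5 a35 fun u => h (Or.inr (e35.mp u))⟩
    rcases opr with hp | hr
    · have hr : ¬ D 0 4 := fun h => xpr ⟨hp, h⟩
      exact xqp ⟨orq.resolve_left hr, hp⟩
    · have hq : ¬ D 0 6 := fun h => xrq ⟨hr, h⟩
      exact xpr ⟨oqp.resolve_left hq, hr⟩
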